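/- Let I ⊆ ℝ be an interval, p ∈ ℕ, d = (d₁,…,d_p) ∈ ℕᵖ, α ∈ ℕ_p^d, and let 𝐌 = (M₁,…,M_p) be a d-averaging mapping on I such that each Mᵢ is continuous and strict. If the incidence graph G_α is ergodic, then there exists a unique 𝐌_α-invariant mean K_α : Iᵖ → I; moreover K_α is continuous and strict, and the iterates 𝐌_αⁿ converge pointwise on Iᵖ to 𝐊_α := (K_α,…,K_α). -/

import Mathlib

/-- There is a walk of length exactly `n` from `v` to `w` in the digraph with edge relation `E`. -/
def HasWalkOfLength {V : Type*} (E : V → V → Prop) (v w : V) (n : ℕ) : Prop :=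
  ∃ f : ℕ → V, f 0 = v ∧ f n = w ∧ ∀ i < n, E (f i) (f (i + 1))

/-- `v ⇝ w` : there is a walk (of some length, possibly `0`) from `v` to `w`. -/
def Reaches {V : Type*} (E : V → V → Prop) : V → V → Prop :=
  Relation.ReflTransGen E

/-- The equivalence relation whose classes are the strongly connected components:
`v ∼ w` iff there are walks from `v` to `w` and from `w` to `v`. -/
def SCCSetoid {V : Type*} (E : V → V → Prop) : Setoid V where
  r v w := Reaches E v w ∧ Reaches E w v
  iseqv := ⟨fun _ => ⟨Relation.ReflTransGen.refl, Relation.ReflTransGen.refl⟩,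
    fun h => ⟨h.2, h.1⟩,
    fun h h' => ⟨Relation.ReflTransGen.trans h.1 h'.1, Relation.ReflTransGen.trans h'.2 h.2⟩⟩

/-- The edge relation of the quotient digraph `G^SCC` of strongly connected components :
`(P, Q)` is an edge iff `P ≠ Q` and there is an edge `(a, b) ∈ E` with `a ∈ P`, `b ∈ Q`. -/
def SCCEdge {V : Type*} (E : V → V → Prop) (P Q : Quotient (SCCSetoid E)) : Prop :=
  P ≠ Q ∧ ∃ a b : V, Quotient.mk (SCCSetoid E) a = P ∧ Quotient.mk (SCCSetoid E) b = Q ∧ E a b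

/-- The root `R(G)`: the union of the strongly connected components having no
incoming edge in `G^SCC` (i.e. lying in the source of `G^SCC`). -/
def Root {V : Type*} (E : V → V → Prop) : Set V :=
  {v | ∀ P, ¬ SCCEdge E P (Quotient.mk (SCCSetoid E) v)}

/-- `f` restricted to `{0,…,n}` is a cycle: a nonempty walk in which only the first and
last vertices are equal. -/
def IsCycle {V : Type*} (E : V → V → Prop) (f : ℕ → V) (n : ℕ) : Prop :=
  0 < n ∧ (∀ i < n, E (f i) (f (i + 1))) ∧ f 0 = f n ∧
    ∀ i j, i < j → j ≤ n → f i = f j → i = 0 ∧ j = n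

/-- A digraph is aperiodic if no integer `k > 1` divides the length of every cycle. -/
def IsAperiodic {V : Type*} (E : V → V → Prop) : Prop :=
  ¬ ∃ k : ℕ, 1 < k ∧ ∀ (f : ℕ → V) (n : ℕ), IsCycle E f n → k ∣ n

/-- A digraph is ergodic if it is nonempty, irreducible and aperiodic. -/
def IsErgodic {V : Type*} (E : V → V → Prop) : Prop :=
  Nonempty V ∧ (∀ v w : V, Reaches E v w) ∧ IsAperiodic E

/-- `M` is a mean on the interval `I ⊆ ℝ` (indexed by the finite index type `ι`):
`min x ≤ M x ≤ max x` for every `x : ι → I`. -/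
def IsMeanOn (I : Set ℝ) {ι : Type*} [Fintype ι] (M : (ι → I) → I) : Prop :=
  ∀ (x : ι → I) (h : (Finset.univ : Finset ι).Nonempty),
    Finset.univ.inf' h (fun i => (x i : ℝ)) ≤ (M x : ℝ) ∧
      (M x : ℝ) ≤ Finset.univ.sup' h (fun i => (x i : ℝ))

/-- `M` is a strict mean on `I`: it is a mean, and `min x < M x < max x`
whenever `x` is nonconstant. -/
def IsStrictMeanOn (I : Set ℝ) {ι : Type*} [Fintype ι] (M : (ι → I) → I) : Prop :=
  IsMeanOn I M ∧ ∀ (x : ι → I) (h : (Finset.univ : Finset ι).Nonempty),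
    (∃ i j, x i ≠ x j) →
      Finset.univ.inf' h (fun i => (x i : ℝ)) < (M x : ℝ) ∧
        (M x : ℝ) < Finset.univ.sup' h (fun i => (x i : ℝ))

/-- The mean-type mapping `𝐌_α : Iᵖ → Iᵖ`, whose `i`-th coordinate is
`Mᵢ(x_{α_{i,1}}, …, x_{α_{i,dᵢ}})`. -/
def MeanTypeMap {I : Set ℝ} {p : ℕ} (d : Fin p → ℕ) (M : ∀ i, (Fin (d i) → I) → I)
    (α : ∀ i, Fin (d i) → Fin p) : (Fin p → I) → (Fin p → I) :=
  fun x i => M i fun j => x (α i j)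

/-- The edge relation of the α-incidence graph `G_α` on `{1,…,p}`:
edges are the pairs `(α_{i,j}, i)`. -/
def IncidenceE {p : ℕ} (d : Fin p → ℕ) (α : ∀ i, Fin (d i) → Fin p) :
    Fin p → Fin p → Prop :=
  fun a b => ∃ j : Fin (d b), α b j = a

namespace MTAux
variable {V : Type*} {E : V → V → Prop}

lemma walk_refl (v : V) : HasWalkOfLength E v v 0 :=
  ⟨fun _ => v, rfl, rfl, fun i hi => absurd hi (Nat.not_lt_zero i)⟩

lemma walk_single {a b : V} (h : E a b) : HasWalkOfLength E a b 1 := by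
  refine ⟨fun i => if i = 0 then a else b, by simp, by simp, ?_⟩
  intro i hi
  interval_cases i
  simpa using h

lemma walk_trans {a b c : V} {m n : ℕ} (h1 : HasWalkOfLength E a b m)
    (h2 : HasWalkOfLength E b c n) : HasWalkOfLength E a c (m + n) := by
  obtain ⟨f, hf0, hfm, hf⟩ := h1
  obtain ⟨g, hg0, hgn, hg⟩ := h2
  refine ⟨fun i => if i < m then f i else g (i - m), ?_, ?_, ?_⟩
  · by_cases h : 0 < m
    · simpa [h] using hf0
    · have hm : m = 0 := by omega
      subst hm
      simpa [hg0] using hfm.symm.trans hf0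
  · simpa [Nat.add_sub_cancel_left, if_neg (by omega : ¬ m + n < m)] using hgn
  · intro i hi
    rcases lt_trichotomy (i + 1) m with h | h | h
    · simp only [if_pos (by omega : i < m), if_pos h]
      exact hf i (by omega)
    · simp only [if_pos (by omega : i < m), if_neg (by omega : ¬ i + 1 < m)]
      have h2 : i + 1 - m = 0 := by omega
      rw [h2, hg0, ← hfm, ← h]
      exact hf i (by omega)
    · simp only [if_neg (by omega : ¬ i < m), if_neg (by omega : ¬ i + 1 < m)]
      have h1 : i + 1 - m = (i - m) + 1 := by omega
      rw [h1]
      exact hg (i - m) (by omega)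

lemma reaches_to_walk {a b : V} (h : Reaches E a b) : ∃ n, HasWalkOfLength E a b n := by
  induction h with
  | refl => exact ⟨0, walk_refl a⟩
  | tail _ hbc ih =>
      obtain ⟨n, hw⟩ := ih
      exact ⟨n + 1, walk_trans hw (walk_single hbc)⟩

end MTAux

namespace MTAux

lemma num_semigroup (S : Set ℕ) (hadd : ∀ a ∈ S, ∀ b ∈ S, a + b ∈ S)
    (hpos : ∀ s ∈ S, 0 < s) (hne : S.Nonempty)
    (hgcd : ¬ ∃ k : ℕ, 1 < k ∧ ∀ s ∈ S, k ∣ s) :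
    ∃ n0, ∀ n ≥ n0, n ∈ S := by
  classical
  -- multiples stay in S
  have hmul : ∀ s ∈ S, ∀ k : ℕ, 1 ≤ k → k * s ∈ S := by
    intro s hs k hk
    induction k with
    | zero => omega
    | succ k ih =>
        rcases Nat.eq_or_lt_of_le hk with h | h
        · simpa [← h] using hs
        · have := hadd _ (ih (by omega)) _ hs
          simpa [Nat.succ_mul] using this
  -- the subgroup of ℤ generated by S is all of ℤ
  set G := AddSubgroup.closure ((fun n : ℕ => (n : ℤ)) '' S) with hGdef
  obtain ⟨g, hG⟩ := Int.subgroup_cyclic G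
  have hdvd : ∀ s ∈ S, g.natAbs ∣ s := by
    intro s hs
    have hmem : (s : ℤ) ∈ G := AddSubgroup.subset_closure ⟨s, hs, rfl⟩
    rw [hG, AddSubgroup.mem_closure_singleton] at hmem
    obtain ⟨n, hn⟩ := hmem
    have : g ∣ (s : ℤ) := ⟨n, by rw [← hn, smul_eq_mul, mul_comm]⟩
    have := Int.natAbs_dvd_natAbs.mpr this
    simpa using this
  obtain ⟨s0, hs0⟩ := hne
  have hg0 : g.natAbs ≠ 0 := by
    intro h
    have := hdvd s0 hs0
    rw [h] at this
    have := hpos s0 hs0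
    omega
  have hg1 : g.natAbs = 1 := by
    by_contra h
    exact hgcd ⟨g.natAbs, by omega, hdvd⟩
  -- 1 ∈ G
  have h1G : (1 : ℤ) ∈ G := by
    rw [hG, AddSubgroup.mem_closure_singleton]
    rcases Int.natAbs_eq_iff.mp hg1 with h | h
    · exact ⟨1, by simp [h]⟩
    · exact ⟨-1, by simp [h]⟩
  -- every element of G is a difference of elements of S ∪ {0}
  have hdiff : ∀ z ∈ G, ∃ x y : ℕ, (x ∈ S ∨ x = 0) ∧ (y ∈ S ∨ y = 0) ∧ z = (x : ℤ) - y := by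
    intro z hz
    rw [hGdef] at hz
    induction hz using AddSubgroup.closure_induction with
    | mem w hw =>
        obtain ⟨s, hs, rfl⟩ := hw
        exact ⟨s, 0, Or.inl hs, Or.inr rfl, by simp⟩
    | zero => exact ⟨0, 0, Or.inr rfl, Or.inr rfl, by simp⟩
    | add a b ha hb iha ihb =>
        obtain ⟨x1, y1, hx1, hy1, rfl⟩ := iha
        obtain ⟨x2, y2, hx2, hy2, rfl⟩ := ihb
        refine ⟨x1 + x2, y1 + y2, ?_, ?_, by push_cast; ring⟩
        · rcases hx1 with h | h <;> rcases hx2 with h' | h'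
          · exact Or.inl (hadd _ h _ h')
          · exact Or.inl (by simpa [h'] using h)
          · exact Or.inl (by simpa [h] using h')
          · exact Or.inr (by omega)
        · rcases hy1 with h | h <;> rcases hy2 with h' | h'
          · exact Or.inl (hadd _ h _ h')
          · exact Or.inl (by simpa [h'] using h)
          · exact Or.inl (by simpa [h] using h')
          · exact Or.inr (by omega)
    | neg a ha iha =>
        obtain ⟨x, y, hx, hy, rfl⟩ := iha
        exact ⟨y, x, hy, hx, by ring⟩
  obtain ⟨x, y, hx, hy, hxy⟩ := hdiff 1 h1G
  have hxy' : x = y + 1 := by omega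
  have hb : ∃ b ∈ S, b + 1 ∈ S := by
    rcases hy with hyS | hy0
    · rcases hx with hxS | hx0
      · exact ⟨y, hyS, by rwa [← hxy']⟩
      · exfalso; omega
    · have hx1 : x = 1 := by omega
      rcases hx with hxS | hx0
      · have h1 : (1 : ℕ) ∈ S := hx1 ▸ hxS
        exact ⟨1, h1, hadd _ h1 _ h1⟩
      · exfalso; omega
  obtain ⟨b, hbS, hb1S⟩ := hb
  have hbpos := hpos b hbS
  refine ⟨b * b, fun n hn => ?_⟩
  set q := n / b with hqdef
  set r := n % b with hrdef
  have hmod : b * q + r = n := Nat.div_add_mod n b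
  have hrb : r < b := Nat.mod_lt _ hbpos
  have hq : b ≤ q := (Nat.le_div_iff_mul_le hbpos).mpr hn
  obtain ⟨t, ht⟩ : ∃ t, q = t + r := ⟨q - r, by omega⟩
  have htpos : 1 ≤ t := by omega
  have hnrep : n = t * b + r * (b + 1) := by
    have h2 : n = b * (t + r) + r := by rw [← ht]; omega
    rw [h2]; ring
  rcases Nat.eq_zero_or_pos r with hr0 | hrpos
  · have hn2 : n = t * b := by rw [hnrep, hr0]; ring
    exact hn2 ▸ hmul b hbS t htpos
  · have h1 := hmul b hbS t htpos
    have h2 := hmul (b + 1) hb1S r hrpos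
    have h3 := hadd _ h1 _ h2
    rwa [← hnrep] at h3

end MTAux

namespace MTAux
variable {V : Type*} {E : V → V → Prop}

lemma closed_walk_gcd (hirr : ∀ a b : V, Reaches E a b) (haper : IsAperiodic E) (v : V) :
    ¬ ∃ k : ℕ, 1 < k ∧ ∀ n ∈ {n : ℕ | 0 < n ∧ HasWalkOfLength E v v n}, k ∣ n := by
  rintro ⟨k, hk, hdvd⟩
  apply haper
  refine ⟨k, hk, fun f n hc => ?_⟩
  obtain ⟨hn, hedges, hclosed, _⟩ := hc
  have hwalk : HasWalkOfLength E (f 0) (f 0) n := ⟨f, rfl, hclosed.symm, hedges⟩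
  obtain ⟨a, hwa⟩ := reaches_to_walk (hirr v (f 0))
  obtain ⟨b, hwb⟩ := reaches_to_walk (hirr (f 0) v)
  rcases Nat.eq_zero_or_pos (a + b) with hab | hab
  · -- a = b = 0, so v = f 0
    have ha : a = 0 := by omega
    subst ha
    obtain ⟨g, hg0, hga, _⟩ := hwa
    have hv : v = f 0 := hg0.symm.trans hga
    exact hdvd n ⟨hn, hv ▸ hwalk⟩
  · have h1 : k ∣ a + b := hdvd _ ⟨hab, walk_trans hwa hwb⟩
    have h2 : k ∣ a + n + b := hdvd _ ⟨by omega, walk_trans (walk_trans hwa hwalk) hwb⟩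
    have := Nat.dvd_sub h2 h1
    rwa [(by omega : a + n + b - (a + b) = n)] at this

lemma primitive [Fintype V] [Nonempty V] (hirr : ∀ a b : V, Reaches E a b)
    (haper : IsAperiodic E) (hin : ∀ b : V, ∃ a, E a b) :
    ∃ N, ∀ a b : V, HasWalkOfLength E a b N := by
  classical
  set v := Classical.arbitrary V with hv
  set S := {n : ℕ | 0 < n ∧ HasWalkOfLength E v v n} with hS
  have hadd : ∀ a ∈ S, ∀ b ∈ S, a + b ∈ S := by
    rintro a ⟨ha, hwa⟩ b ⟨hb, hwb⟩
    exact ⟨by omega, walk_trans hwa hwb⟩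
  have hne : S.Nonempty := by
    obtain ⟨a, ha⟩ := hin v
    obtain ⟨m, hm⟩ := reaches_to_walk (hirr v a)
    exact ⟨m + 1, by omega, walk_trans hm (walk_single ha)⟩
  obtain ⟨n0, hn0⟩ := num_semigroup S hadd (fun s hs => hs.1) hne (closed_walk_gcd hirr haper v)
  choose g hg using fun a => reaches_to_walk (hirr a v)
  choose h hh using fun b => reaches_to_walk (hirr v b)
  set C1 := Finset.univ.sup g
  set C2 := Finset.univ.sup h
  refine ⟨n0 + 1 + C1 + C2, fun a b => ?_⟩
  have hga : g a ≤ C1 := Finset.le_sup (Finset.mem_univ a)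
  have hhb : h b ≤ C2 := Finset.le_sup (Finset.mem_univ b)
  set m := n0 + 1 + C1 + C2 - g a - h b with hm
  have hmS : m ∈ S := hn0 m (by omega)
  have := walk_trans (walk_trans (hg a) hmS.2) (hh b)
  rwa [(by omega : g a + m + h b = n0 + 1 + C1 + C2)] at this

end MTAux


namespace MTAux

variable {I : Set ℝ} {p : ℕ} [Nonempty (Fin p)]

/-- min of the coordinates -/
noncomputable def lo (x : Fin p → I) : ℝ :=
  Finset.univ.inf' Finset.univ_nonempty fun i => (x i : ℝ)

/-- max of the coordinates -/
noncomputable def hi (x : Fin p → I) : ℝ :=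
  Finset.univ.sup' Finset.univ_nonempty fun i => (x i : ℝ)

lemma lo_le (x : Fin p → I) (i : Fin p) : lo x ≤ (x i : ℝ) :=
  Finset.inf'_le _ (Finset.mem_univ i)

lemma le_hi (x : Fin p → I) (i : Fin p) : (x i : ℝ) ≤ hi x :=
  Finset.le_sup' (fun i => ((x i : ℝ))) (Finset.mem_univ i)

lemma lo_le_hi (x : Fin p → I) : lo x ≤ hi x :=
  le_trans (lo_le x (Classical.arbitrary _)) (le_hi x _)

lemma lo_mem (x : Fin p → I) : lo x ∈ I := by
  obtain ⟨i, _, h⟩ := Finset.exists_mem_eq_inf' (Finset.univ_nonempty)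
    (fun i : Fin p => (x i : ℝ))
  rw [lo, h]; exact (x i).2

lemma hi_mem (x : Fin p → I) : hi x ∈ I := by
  obtain ⟨i, _, h⟩ := Finset.exists_mem_eq_sup' (Finset.univ_nonempty)
    (fun i : Fin p => (x i : ℝ))
  rw [hi, h]; exact (x i).2

lemma lo_continuous : Continuous (lo (I := I) (p := p)) :=
  Continuous.finset_inf'_apply _ fun i _ => continuous_subtype_val.comp (continuous_apply i)

lemma hi_continuous : Continuous (hi (I := I) (p := p)) :=
  Continuous.finset_sup'_apply _ fun i _ => continuous_subtype_val.comp (continuous_apply i)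

variable {d : Fin p → ℕ} {M : ∀ i, (Fin (d i) → I) → I} {α : ∀ i, Fin (d i) → Fin p}

lemma meanTypeMap_continuous (hcont : ∀ i, Continuous (M i)) :
    Continuous (MeanTypeMap d M α) :=
  continuous_pi fun i => (hcont i).comp (continuous_pi fun j => continuous_apply (α i j))

lemma lo_le_map (hd : ∀ i, 0 < d i) (hmean : ∀ i, IsMeanOn I (M i)) (x : Fin p → I) :
    lo x ≤ lo (MeanTypeMap d M α x) := by
  apply Finset.le_inf'
  intro i _
  have hnei : (Finset.univ : Finset (Fin (d i))).Nonempty := ⟨⟨0, hd i⟩, Finset.mem_univ _⟩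
  refine le_trans ?_ ((hmean i (fun j => x (α i j)) hnei).1)
  exact Finset.le_inf' _ _ fun j _ => lo_le x (α i j)

lemma map_le_hi (hd : ∀ i, 0 < d i) (hmean : ∀ i, IsMeanOn I (M i)) (x : Fin p → I) :
    hi (MeanTypeMap d M α x) ≤ hi x := by
  apply Finset.sup'_le
  intro i _
  have hnei : (Finset.univ : Finset (Fin (d i))).Nonempty := ⟨⟨0, hd i⟩, Finset.mem_univ _⟩
  refine le_trans ((hmean i (fun j => x (α i j)) hnei).2) ?_
  exact Finset.sup'_le _ _ fun j _ => le_hi x (α i j)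

lemma min_propagate (hd : ∀ i, 0 < d i) (hstrict : ∀ i, IsStrictMeanOn I (M i))
    (x : Fin p → I) (c : ℝ) (hlb : ∀ j, c ≤ (x j : ℝ)) (i : Fin p)
    (heq : ((MeanTypeMap d M α x) i : ℝ) = c) : ∀ j, ((x (α i j)) : ℝ) = c := by
  set y : Fin (d i) → I := fun j => x (α i j) with hy
  have hnei : (Finset.univ : Finset (Fin (d i))).Nonempty := ⟨⟨0, hd i⟩, Finset.mem_univ _⟩
  have hinfge : c ≤ Finset.univ.inf' hnei fun j => (y j : ℝ) :=
    Finset.le_inf' _ _ fun j _ => hlb (α i j)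
  have hMeq : (M i y : ℝ) = c := heq
  by_cases hconst : ∃ j j', y j ≠ y j'
  · exfalso
    have := ((hstrict i).2 y hnei hconst).1
    rw [hMeq] at this
    exact absurd (lt_of_le_of_lt hinfge this) (lt_irrefl c)
  · push_neg at hconst
    intro j
    have hinfle : (Finset.univ.inf' hnei fun j => (y j : ℝ)) ≤ c := by
      rw [← hMeq]; exact ((hstrict i).1 y hnei).1
    obtain ⟨j0, _, hj0⟩ := Finset.exists_mem_eq_inf' hnei (fun j => (y j : ℝ))
    have : y j = y j0 := hconst j j0
    calc ((x (α i j)) : ℝ) = (y j0 : ℝ) := by rw [← this]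
      _ = c := by rw [← hj0]; exact le_antisymm hinfle hinfge

lemma max_propagate (hd : ∀ i, 0 < d i) (hstrict : ∀ i, IsStrictMeanOn I (M i))
    (x : Fin p → I) (c : ℝ) (hub : ∀ j, (x j : ℝ) ≤ c) (i : Fin p)
    (heq : ((MeanTypeMap d M α x) i : ℝ) = c) : ∀ j, ((x (α i j)) : ℝ) = c := by
  set y : Fin (d i) → I := fun j => x (α i j) with hy
  have hnei : (Finset.univ : Finset (Fin (d i))).Nonempty := ⟨⟨0, hd i⟩, Finset.mem_univ _⟩
  have hsuple : (Finset.univ.sup' hnei fun j => (y j : ℝ)) ≤ c :=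
    Finset.sup'_le _ _ fun j _ => hub (α i j)
  have hMeq : (M i y : ℝ) = c := heq
  by_cases hconst : ∃ j j', y j ≠ y j'
  · exfalso
    have := ((hstrict i).2 y hnei hconst).2
    rw [hMeq] at this
    exact absurd (lt_of_lt_of_le this hsuple) (lt_irrefl c)
  · push_neg at hconst
    intro j
    have hsupge : c ≤ Finset.univ.sup' hnei fun j => (y j : ℝ) := by
      rw [← hMeq]; exact ((hstrict i).1 y hnei).2
    obtain ⟨j0, _, hj0⟩ := Finset.exists_mem_eq_sup' hnei (fun j => (y j : ℝ))
    have : y j = y j0 := hconst j j0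
    calc ((x (α i j)) : ℝ) = (y j0 : ℝ) := by rw [← this]
      _ = c := by rw [← hj0]; exact le_antisymm hsuple hsupge

end MTAux

namespace MTAux
set_option linter.unusedSectionVars false

variable {I : Set ℝ} {p : ℕ} [Nonempty (Fin p)]
variable {d : Fin p → ℕ} {M : ∀ i, (Fin (d i) → I) → I} {α : ∀ i, Fin (d i) → Fin p}

lemma lb_iterate (hd : ∀ i, 0 < d i) (hmean : ∀ i, IsMeanOn I (M i)) (x : Fin p → I)
    (c : ℝ) (hc : ∀ j, c ≤ (x j : ℝ)) (n : ℕ) (j : Fin p) :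
    c ≤ (((MeanTypeMap d M α)^[n] x) j : ℝ) := by
  induction n generalizing j with
  | zero => exact hc j
  | succ n ih =>
      rw [Function.iterate_succ_apply']
      refine le_trans (le_trans (Finset.le_inf' _ _ fun j _ => ih j :
        c ≤ lo ((MeanTypeMap d M α)^[n] x)) (lo_le_map hd hmean _)) (lo_le _ j)

lemma ub_iterate (hd : ∀ i, 0 < d i) (hmean : ∀ i, IsMeanOn I (M i)) (x : Fin p → I)
    (c : ℝ) (hc : ∀ j, (x j : ℝ) ≤ c) (n : ℕ) (j : Fin p) :
    (((MeanTypeMap d M α)^[n] x) j : ℝ) ≤ c := by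
  induction n generalizing j with
  | zero => exact hc j
  | succ n ih =>
      rw [Function.iterate_succ_apply']
      refine le_trans (le_hi _ j) (le_trans (map_le_hi hd hmean _)
        (Finset.sup'_le _ _ fun j _ => ih j : hi ((MeanTypeMap d M α)^[n] x) ≤ c))

lemma walk_min (hd : ∀ i, 0 < d i) (hstrict : ∀ i, IsStrictMeanOn I (M i)) (x : Fin p → I)
    (c : ℝ) (hc : ∀ j, c ≤ (x j : ℝ)) :
    ∀ (n : ℕ) (i a : Fin p), HasWalkOfLength (IncidenceE d α) a i n →
      (((MeanTypeMap d M α)^[n] x) i : ℝ) = c → (x a : ℝ) = c := by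
  intro n
  induction n with
  | zero =>
      rintro i a ⟨f, hf0, hfn, -⟩ heq
      rw [← hf0, hfn]; exact heq
  | succ n ih =>
      rintro i a ⟨f, hf0, hfn, hedge⟩ heq
      rw [Function.iterate_succ_apply'] at heq
      have hprop := min_propagate hd hstrict ((MeanTypeMap d M α)^[n] x) c
        (lb_iterate hd (fun i => (hstrict i).1) x c hc n) i heq
      have hlast : IncidenceE d α (f n) i := by
        have := hedge n (by omega)
        rwa [hfn] at this
      obtain ⟨j, hj⟩ := hlast
      have hfnc : (((MeanTypeMap d M α)^[n] x) (f n) : ℝ) = c := by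
        rw [← hj]; exact hprop j
      exact ih (f n) a ⟨f, hf0, rfl, fun i hi => hedge i (by omega)⟩ hfnc

lemma walk_max (hd : ∀ i, 0 < d i) (hstrict : ∀ i, IsStrictMeanOn I (M i)) (x : Fin p → I)
    (c : ℝ) (hc : ∀ j, (x j : ℝ) ≤ c) :
    ∀ (n : ℕ) (i a : Fin p), HasWalkOfLength (IncidenceE d α) a i n →
      (((MeanTypeMap d M α)^[n] x) i : ℝ) = c → (x a : ℝ) = c := by
  intro n
  induction n with
  | zero =>
      rintro i a ⟨f, hf0, hfn, -⟩ heq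
      rw [← hf0, hfn]; exact heq
  | succ n ih =>
      rintro i a ⟨f, hf0, hfn, hedge⟩ heq
      rw [Function.iterate_succ_apply'] at heq
      have hprop := max_propagate hd hstrict ((MeanTypeMap d M α)^[n] x) c
        (ub_iterate hd (fun i => (hstrict i).1) x c hc n) i heq
      have hlast : IncidenceE d α (f n) i := by
        have := hedge n (by omega)
        rwa [hfn] at this
      obtain ⟨j, hj⟩ := hlast
      have hfnc : (((MeanTypeMap d M α)^[n] x) (f n) : ℝ) = c := by
        rw [← hj]; exact hprop j
      exact ih (f n) a ⟨f, hf0, rfl, fun i hi => hedge i (by omega)⟩ hfnc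

lemma lo_lt_iterate (hd : ∀ i, 0 < d i) (hstrict : ∀ i, IsStrictMeanOn I (M i)) {N : ℕ}
    (hN : ∀ a b : Fin p, HasWalkOfLength (IncidenceE d α) a b N) (x : Fin p → I)
    (hnc : ∃ a b, x a ≠ x b) : lo x < lo ((MeanTypeMap d M α)^[N] x) := by
  have hle : lo x ≤ lo ((MeanTypeMap d M α)^[N] x) :=
    Finset.le_inf' _ _ fun j _ => lb_iterate hd (fun i => (hstrict i).1) x (lo x) (lo_le x) N j
  rcases eq_or_lt_of_le hle with heq | hlt
  · exfalso
    obtain ⟨i, _, hieq⟩ := Finset.exists_mem_eq_inf'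
      (Finset.univ_nonempty (α := Fin p)) (fun i => ((((MeanTypeMap d M α)^[N] x) i : ℝ)))
    have hic : (((MeanTypeMap d M α)^[N] x) i : ℝ) = lo x := by
      rw [← hieq]; exact heq.symm
    obtain ⟨a, b, hab⟩ := hnc
    have ha := walk_min hd hstrict x (lo x) (lo_le x) N i a (hN a i) hic
    have hb := walk_min hd hstrict x (lo x) (lo_le x) N i b (hN b i) hic
    exact hab (Subtype.ext (ha.trans hb.symm))
  · exact hlt

lemma iterate_lt_hi (hd : ∀ i, 0 < d i) (hstrict : ∀ i, IsStrictMeanOn I (M i)) {N : ℕ}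
    (hN : ∀ a b : Fin p, HasWalkOfLength (IncidenceE d α) a b N) (x : Fin p → I)
    (hnc : ∃ a b, x a ≠ x b) : hi ((MeanTypeMap d M α)^[N] x) < hi x := by
  have hle : hi ((MeanTypeMap d M α)^[N] x) ≤ hi x :=
    Finset.sup'_le _ _ fun j _ => ub_iterate hd (fun i => (hstrict i).1) x (hi x) (le_hi x) N j
  rcases eq_or_lt_of_le hle with heq | hlt
  · exfalso
    obtain ⟨i, _, hieq⟩ := Finset.exists_mem_eq_sup'
      (Finset.univ_nonempty (α := Fin p)) (fun i => ((((MeanTypeMap d M α)^[N] x) i : ℝ)))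
    have hic : (((MeanTypeMap d M α)^[N] x) i : ℝ) = hi x := by
      rw [← hieq]; exact heq
    obtain ⟨a, b, hab⟩ := hnc
    have ha := walk_max hd hstrict x (hi x) (le_hi x) N i a (hN a i) hic
    have hb := walk_max hd hstrict x (hi x) (le_hi x) N i b (hN b i) hic
    exact hab (Subtype.ext (ha.trans hb.symm))
  · exact hlt

end MTAux

namespace MTAux
open Filter Topology
variable {I : Set ℝ} {p : ℕ} [Nonempty (Fin p)]
variable {d : Fin p → ℕ} {M : ∀ i, (Fin (d i) → I) → I} {α : ∀ i, Fin (d i) → Fin p}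

lemma key (hI : I.OrdConnected) (hd : ∀ i, 0 < d i) (hstrict : ∀ i, IsStrictMeanOn I (M i))
    (hcont : ∀ i, Continuous (M i)) {N : ℕ}
    (hN : ∀ a b : Fin p, HasWalkOfLength (IncidenceE d α) a b N) (x : Fin p → I) :
    Tendsto (fun n => lo ((MeanTypeMap d M α)^[n] x)) atTop
        (𝓝 (⨆ n, lo ((MeanTypeMap d M α)^[n] x))) ∧
      Tendsto (fun n => hi ((MeanTypeMap d M α)^[n] x)) atTop
        (𝓝 (⨆ n, lo ((MeanTypeMap d M α)^[n] x))) ∧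
      (∀ n, lo ((MeanTypeMap d M α)^[n] x) ≤ ⨆ n, lo ((MeanTypeMap d M α)^[n] x)) ∧
      (∀ n, (⨆ n, lo ((MeanTypeMap d M α)^[n] x)) ≤ hi ((MeanTypeMap d M α)^[n] x)) := by
  have hmean : ∀ i, IsMeanOn I (M i) := fun i => (hstrict i).1
  set T := MeanTypeMap d M α with hT
  set m : ℕ → ℝ := fun n => lo (T^[n] x) with hm
  set Mn : ℕ → ℝ := fun n => hi (T^[n] x) with hMn
  have hmono : Monotone m := monotone_nat_of_le_succ fun n => by
    rw [hm]; simp only [Function.iterate_succ_apply']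
    exact lo_le_map hd hmean _
  have hanti : Antitone Mn := antitone_nat_of_succ_le fun n => by
    rw [hMn]; simp only [Function.iterate_succ_apply']
    exact map_le_hi hd hmean _
  have hmM : ∀ n, m n ≤ Mn n := fun n => lo_le_hi _
  have hmub : ∀ k n, m k ≤ Mn n := fun k n =>
    le_trans (hmono (le_max_left k n)) (le_trans (hmM _) (hanti (le_max_right k n)))
  have hbddm : BddAbove (Set.range m) := ⟨Mn 0, by rintro _ ⟨k, rfl⟩; exact hmub k 0⟩
  have hbddM : BddBelow (Set.range Mn) := ⟨m 0, by rintro _ ⟨k, rfl⟩; exact hmub 0 k⟩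
  set L : ℝ := ⨆ n, m n with hL
  set L2 : ℝ := ⨅ n, Mn n with hL2
  have h1 : Tendsto m atTop (𝓝 L) := tendsto_atTop_ciSup hmono hbddm
  have h2 : Tendsto Mn atTop (𝓝 L2) := tendsto_atTop_ciInf hanti hbddM
  have hLle : L ≤ L2 := le_of_tendsto_of_tendsto' h1 h2 hmM
  have hL3 : ∀ n, m n ≤ L := fun n => le_ciSup hbddm n
  have hL4 : ∀ n, L ≤ Mn n := fun n => ciSup_le fun k => hmub k n
  -- main point : L = L2
  have hLeq : L = L2 := by
    by_contra hne
    have hlt : L < L2 := lt_of_le_of_ne hLle hne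
    set u : ℕ → (Fin p → ℝ) := fun n i => ((T^[n] x) i : ℝ) with hu
    have humem : ∀ n, u n ∈ Set.Icc (fun _ : Fin p => m 0) (fun _ => Mn 0) := by
      intro n
      rw [Set.mem_Icc]
      constructor
      · intro i; exact le_trans (hmono (Nat.zero_le n)) (lo_le _ i)
      · intro i; exact le_trans (le_hi _ i) (hanti (Nat.zero_le n))
    obtain ⟨z, hz, φ, hφ, hzt⟩ := (isCompact_Icc (a := fun _ : Fin p => m 0)
      (b := fun _ => Mn 0)).tendsto_subseq humem
    rw [Set.mem_Icc] at hz
    have hm0 : m 0 = lo x := by rw [hm]; simp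
    have hMn0 : Mn 0 = hi x := by rw [hMn]; simp
    have hzI : ∀ i, z i ∈ I := by
      intro i
      refine hI.out (lo_mem x) (hi_mem x) ⟨?_, ?_⟩
      · rw [← hm0]; exact hz.1 i
      · rw [← hMn0]; exact hz.2 i
    set y : Fin p → I := fun i => ⟨z i, hzI i⟩ with hy
    have hyt : Tendsto (fun k => T^[φ k] x) atTop (𝓝 y) := by
      rw [tendsto_pi_nhds]
      intro i
      rw [tendsto_subtype_rng]
      exact (tendsto_pi_nhds.mp hzt) i
    have hloy : lo y = L :=
      tendsto_nhds_unique ((lo_continuous.tendsto y).comp hyt)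
        (h1.comp hφ.tendsto_atTop)
    have hhiy : hi y = L2 :=
      tendsto_nhds_unique ((hi_continuous.tendsto y).comp hyt)
        (h2.comp hφ.tendsto_atTop)
    have hnc : ∃ a b, y a ≠ y b := by
      by_contra hc
      push_neg at hc
      obtain ⟨i0, _, hi0⟩ := Finset.exists_mem_eq_inf'
        (Finset.univ_nonempty (α := Fin p)) (fun i => ((y i : ℝ)))
      obtain ⟨i1, _, hi1⟩ := Finset.exists_mem_eq_sup'
        (Finset.univ_nonempty (α := Fin p)) (fun i => ((y i : ℝ)))
      have : lo y = hi y := by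
        rw [lo, hi, hi0, hi1, hc i0 i1]
      rw [hloy, hhiy] at this
      exact absurd this (ne_of_lt hlt)
    have hstep : lo y < lo (T^[N] y) := lo_lt_iterate hd hstrict hN y hnc
    have hTNcont : Continuous (fun w : Fin p → I => lo (T^[N] w)) :=
      lo_continuous.comp ((meanTypeMap_continuous hcont).iterate N)
    have ht1 : Tendsto (fun k => lo (T^[N] (T^[φ k] x))) atTop (𝓝 (lo (T^[N] y))) :=
      (hTNcont.tendsto y).comp hyt
    have ht2 : Tendsto (fun k => m (N + φ k)) atTop (𝓝 L) :=
      h1.comp (tendsto_atTop_mono (fun k => Nat.le_add_left (φ k) N) hφ.tendsto_atTop)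
    have heqfun : (fun k => m (N + φ k)) = fun k => lo (T^[N] (T^[φ k] x)) := by
      funext k
      rw [hm]
      simp [Function.iterate_add_apply]
    rw [heqfun] at ht2
    have : L = lo (T^[N] y) := tendsto_nhds_unique ht2 ht1
    rw [hloy, ← this] at hstep
    exact absurd hstep (lt_irrefl L)
  exact ⟨h1, hLeq ▸ h2, hL3, hL4⟩

end MTAux


namespace MTAux
open Filter Topology in
theorem main_result {I : Set ℝ} (hI : I.OrdConnected) {p : ℕ} (hp : 0 < p)
    (d : Fin p → ℕ) (hd : ∀ i, 0 < d i)
    (M : ∀ i, (Fin (d i) → I) → I)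
    (hstrict : ∀ i, IsStrictMeanOn I (M i)) (hcont : ∀ i, Continuous (M i))
    (α : ∀ i, Fin (d i) → Fin p)
    (herg : IsErgodic (IncidenceE d α)) :
    ∃ K : (Fin p → I) → I, IsMeanOn I K ∧ Continuous K ∧ IsStrictMeanOn I K ∧
      (∀ x, K (MeanTypeMap d M α x) = K x) ∧
      (∀ L : (Fin p → I) → I, IsMeanOn I L → (∀ x, L (MeanTypeMap d M α x) = L x) → L = K) ∧
      (∀ (x : Fin p → I) (i : Fin p),
        Filter.Tendsto (fun n => (((MeanTypeMap d M α)^[n] x) i : ℝ))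
          Filter.atTop (nhds (K x))) := by
  classical
  haveI : Nonempty (Fin p) := ⟨⟨0, hp⟩⟩
  obtain ⟨-, hirr, haper⟩ := herg
  have hin : ∀ b : Fin p, ∃ a, IncidenceE d α a b := fun b => ⟨α b ⟨0, hd b⟩, ⟨0, hd b⟩, rfl⟩
  obtain ⟨N, hN⟩ := MTAux.primitive hirr haper hin
  set T := MeanTypeMap d M α with hT
  set Kr : (Fin p → I) → ℝ := fun x => ⨆ n, MTAux.lo (T^[n] x) with hKrdef
  have hkey := fun x : Fin p → I => MTAux.key hI hd hstrict hcont hN x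
  have hlo0 : ∀ x : Fin p → I, MTAux.lo x ≤ Kr x := fun x => by
    have := (hkey x).2.2.1 0
    simpa using this
  have hhi0 : ∀ x : Fin p → I, Kr x ≤ MTAux.hi x := fun x => by
    have := (hkey x).2.2.2 0
    simpa using this
  have hKmem : ∀ x, Kr x ∈ I := fun x =>
    hI.out (MTAux.lo_mem x) (MTAux.hi_mem x) ⟨hlo0 x, hhi0 x⟩
  set K : (Fin p → I) → I := fun x => ⟨Kr x, hKmem x⟩ with hKdef
  have hmeanK : IsMeanOn I K := fun x h => ⟨hlo0 x, hhi0 x⟩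
  have hstrictK : IsStrictMeanOn I K := by
    refine ⟨hmeanK, fun x h hnc => ⟨?_, ?_⟩⟩
    · exact lt_of_lt_of_le (MTAux.lo_lt_iterate hd hstrict hN x hnc) ((hkey x).2.2.1 N)
    · exact lt_of_le_of_lt ((hkey x).2.2.2 N) (MTAux.iterate_lt_hi hd hstrict hN x hnc)
  have hinv : ∀ x, K (T x) = K x := by
    intro x
    apply Subtype.ext
    show Kr (T x) = Kr x
    have h1 : Tendsto (fun n => MTAux.lo (T^[n] (T x))) atTop (𝓝 (Kr (T x))) := (hkey (T x)).1
    have h2 : Tendsto (fun n => MTAux.lo (T^[n + 1] x)) atTop (𝓝 (Kr x)) :=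
      (hkey x).1.comp (tendsto_add_atTop_nat 1)
    have heq : (fun n => MTAux.lo (T^[n] (T x))) = fun n => MTAux.lo (T^[n + 1] x) := by
      funext n; rw [Function.iterate_succ_apply]
    rw [heq] at h1
    exact tendsto_nhds_unique h1 h2
  have huniq : ∀ L : (Fin p → I) → I, IsMeanOn I L → (∀ x, L (T x) = L x) → L = K := by
    intro L hLmean hLinv
    funext x
    apply Subtype.ext
    have hiter : ∀ n, L (T^[n] x) = L x := by
      intro n
      induction n with
      | zero => rfl
      | succ n ih => rw [Function.iterate_succ_apply', hLinv, ih]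
    have hbound : ∀ n, MTAux.lo (T^[n] x) ≤ (L x : ℝ) ∧ (L x : ℝ) ≤ MTAux.hi (T^[n] x) := by
      intro n
      have := hLmean (T^[n] x) Finset.univ_nonempty
      rw [hiter n] at this
      exact this
    have hle := le_of_tendsto (hkey x).1 (Filter.Eventually.of_forall fun n => (hbound n).1)
    have hge := ge_of_tendsto (hkey x).2.1 (Filter.Eventually.of_forall fun n => (hbound n).2)
    exact le_antisymm hge hle
  have hconv : ∀ (x : Fin p → I) (i : Fin p),
      Tendsto (fun n => ((T^[n] x) i : ℝ)) atTop (𝓝 (Kr x)) := by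
    intro x i
    exact tendsto_of_tendsto_of_tendsto_of_le_of_le (hkey x).1 (hkey x).2.1
      (fun n => MTAux.lo_le _ i) (fun n => MTAux.le_hi _ i)
  have hKrcont : Continuous Kr := by
    rw [Metric.continuous_iff]
    intro x ε hε
    obtain ⟨n, hn⟩ := (((hkey x).2.1.sub (hkey x).1).eventually
      (gt_mem_nhds (show Kr x - Kr x < ε / 4 by linarith))).exists
    have hgc : Continuous (fun y : Fin p → I => MTAux.lo (T^[n] y)) :=
      MTAux.lo_continuous.comp ((MTAux.meanTypeMap_continuous hcont).iterate n)
    have hhc : Continuous (fun y : Fin p → I => MTAux.hi (T^[n] y)) :=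
      MTAux.hi_continuous.comp ((MTAux.meanTypeMap_continuous hcont).iterate n)
    obtain ⟨δ1, hδ1, hδ1'⟩ := Metric.continuousAt_iff.mp (hgc.continuousAt (x := x)) (ε / 4)
      (by linarith)
    obtain ⟨δ2, hδ2, hδ2'⟩ := Metric.continuousAt_iff.mp (hhc.continuousAt (x := x)) (ε / 4)
      (by linarith)
    refine ⟨min δ1 δ2, lt_min hδ1 hδ2, fun y hy => ?_⟩
    have hgy := hδ1' (lt_of_lt_of_le hy (min_le_left _ _))
    have hhy := hδ2' (lt_of_lt_of_le hy (min_le_right _ _))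
    rw [Real.dist_eq] at hgy hhy ⊢
    have hb1 : MTAux.lo (T^[n] y) ≤ Kr y := (hkey y).2.2.1 n
    have hb2 : Kr y ≤ MTAux.hi (T^[n] y) := (hkey y).2.2.2 n
    have hb3 : MTAux.lo (T^[n] x) ≤ Kr x := (hkey x).2.2.1 n
    have hb4 : Kr x ≤ MTAux.hi (T^[n] x) := (hkey x).2.2.2 n
    have hn' : MTAux.hi (T^[n] x) - MTAux.lo (T^[n] x) < ε / 4 := hn
    have habs1 := abs_lt.mp hgy
    have habs2 := abs_lt.mp hhy
    rw [abs_lt]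
    constructor <;> linarith
  have hKcont : Continuous K := hKrcont.subtype_mk hKmem
  exact ⟨K, hmeanK, hKcont, hstrictK, hinv, huniq, hconv⟩

end MTAux

/-- If `𝐌 = (M₁,…,M_p)` is a `d`-averaging mapping on an interval `I` with all `Mᵢ`
continuous and strict, and the incidence graph `G_α` is ergodic, then there is a unique
`𝐌_α`-invariant mean `K_α`; it is continuous and strict, and the iterates `𝐌_αⁿ`
converge pointwise to `𝐊_α = (K_α,…,K_α)`. -/
theorem stmt_11 {I : Set ℝ} (hI : I.OrdConnected) {p : ℕ} (hp : 0 < p)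
    (d : Fin p → ℕ) (hd : ∀ i, 0 < d i)
    (M : ∀ i, (Fin (d i) → I) → I)
    (hstrict : ∀ i, IsStrictMeanOn I (M i)) (hcont : ∀ i, Continuous (M i))
    (α : ∀ i, Fin (d i) → Fin p)
    (herg : IsErgodic (IncidenceE d α)) :
    ∃ K : (Fin p → I) → I, IsMeanOn I K ∧ Continuous K ∧ IsStrictMeanOn I K ∧
      (∀ x, K (MeanTypeMap d M α x) = K x) ∧
      (∀ L : (Fin p → I) → I, IsMeanOn I L → (∀ x, L (MeanTypeMap d M α x) = L x) → L = K) ∧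
      (∀ (x : Fin p → I) (i : Fin p),
        Filter.Tendsto (fun n => (((MeanTypeMap d M α)^[n] x) i : ℝ))
          Filter.atTop (nhds (K x))) := by
  exact MTAux.main_result hI hp d hd M hstrict hcont α herg
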